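/- Let σ > 0, let W_σ be the Lennard-Jones potential, and let F_2 be defined with W = W_σ, so that F_2(a,a;·) is a function of one variable x_1 ∈ (0,1). Then for a > 0, the second derivative of x_1 ↦ F_2(a,a;x_1) at x_1 = 1/2 is positive if and only if a/σ < (8/2079)^{1/6}·π. -/

import Mathlib

open Real Filter Set

/-- The Lennard-Jones potential `W_σ(t) = (σ/t)^12 − (σ/t)^6`. -/
noncomputable def LJ (σ : ℝ) : ℝ → ℝ := fun t => (σ / t) ^ 12 - (σ / t) ^ 6

/-- `F_m(a,b;x)` as in the optimal profile problem. -/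
noncomputable def Fm (W : ℝ → ℝ) (m : ℕ) (a b : ℝ) (x : Fin (m - 1) → ℝ) : ℝ :=
  (∑' i : ℕ, ∑ j : Fin (m - 1),
      (W (b * (m : ℝ) * x j + a * (i : ℝ)) -
        W (b * (((j : ℕ) : ℝ) + 1) + a * (i : ℝ))))
  + (∑ i : Fin (m - 1), ∑ j : Fin (m - 1),
      if (i : ℕ) < (j : ℕ) then W (b * (m : ℝ) * (x j - x i)) else 0)
  + (∑ i : Fin (m - 1), ∑' j : ℕ,
      W (b * (((j : ℝ) + (m : ℝ)) - (m : ℝ) * x i)))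
  - ((m : ℝ) - 1) * ∑' j : ℕ, W (b * ((j : ℝ) + 1))

/-! ### Auxiliary material -/

open Finset in
private lemma bern5 : bernoulli' 5 = 0 := bernoulli'_eq_zero_of_odd ⟨2, rfl⟩ (by norm_num)
open Finset in
private lemma bern7 : bernoulli' 7 = 0 := bernoulli'_eq_zero_of_odd ⟨3, rfl⟩ (by norm_num)
open Finset in
private lemma bern9 : bernoulli' 9 = 0 := bernoulli'_eq_zero_of_odd ⟨4, rfl⟩ (by norm_num)
open Finset in
private lemma bern11 : bernoulli' 11 = 0 := bernoulli'_eq_zero_of_odd ⟨5, rfl⟩ (by norm_num)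
open Finset in
private lemma bern13 : bernoulli' 13 = 0 := bernoulli'_eq_zero_of_odd ⟨6, rfl⟩ (by norm_num)

open Finset in
private lemma bern6 : bernoulli' 6 = 1/42 := by
  rw [bernoulli'_def]
  norm_num [sum_range_succ, bernoulli'_zero, bernoulli'_one, bernoulli'_two, bernoulli'_three,
    bernoulli'_four, bern5, Nat.choose]

open Finset in
private lemma bern8 : bernoulli' 8 = -1/30 := by
  rw [bernoulli'_def]
  norm_num [sum_range_succ, bernoulli'_zero, bernoulli'_one, bernoulli'_two, bernoulli'_three,
    bernoulli'_four, bern5, bern6, bern7, Nat.choose]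

open Finset in
private lemma bern10 : bernoulli' 10 = 5/66 := by
  rw [bernoulli'_def]
  norm_num [sum_range_succ, bernoulli'_zero, bernoulli'_one, bernoulli'_two, bernoulli'_three,
    bernoulli'_four, bern5, bern6, bern7, bern8, bern9, Nat.choose]

open Finset in
private lemma bern12 : bernoulli' 12 = -691/2730 := by
  rw [bernoulli'_def]
  norm_num [sum_range_succ, bernoulli'_zero, bernoulli'_one, bernoulli'_two, bernoulli'_three,
    bernoulli'_four, bern5, bern6, bern7, bern8, bern9, bern10, bern11, Nat.choose]

open Finset in
private lemma bern14 : bernoulli' 14 = 7/6 := by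
  rw [bernoulli'_def]
  norm_num [sum_range_succ, bernoulli'_zero, bernoulli'_one, bernoulli'_two, bernoulli'_three,
    bernoulli'_four, bern5, bern6, bern7, bern8, bern9, bern10, bern11, bern12, bern13, Nat.choose]

private lemma bernB8 : bernoulli 8 = -1/30 := by
  rw [bernoulli_eq_bernoulli'_of_ne_one (by norm_num), bern8]

private lemma bernB14 : bernoulli 14 = 7/6 := by
  rw [bernoulli_eq_bernoulli'_of_ne_one (by norm_num), bern14]

private lemma hasSum_zeta8 : HasSum (fun n : ℕ => 1 / ((n : ℝ) + 1) ^ 8) (π ^ 8 / 9450) := by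
  have h := hasSum_zeta_nat (k := 4) (by norm_num)
  norm_num [bernB8, Nat.factorial] at h
  have h2 := (hasSum_nat_add_iff' (f := fun n : ℕ => ((n : ℝ) ^ 8)⁻¹) 1).mpr h
  push_cast at h2
  norm_num at h2
  have e : (128 * π ^ 8 * (1 / 30) / 40320 : ℝ) = π ^ 8 / 9450 := by ring
  rw [e] at h2
  simpa [one_div] using h2

private lemma hasSum_zeta14 :
    HasSum (fun n : ℕ => 1 / ((n : ℝ) + 1) ^ 14) (2 * π ^ 14 / 18243225) := by
  have h := hasSum_zeta_nat (k := 7) (by norm_num)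
  norm_num [bernB14, Nat.factorial] at h
  have h2 := (hasSum_nat_add_iff' (f := fun n : ℕ => ((n : ℝ) ^ 14)⁻¹) 1).mpr h
  push_cast at h2
  norm_num at h2
  have e : (8192 * π ^ 14 * (7 / 6) / 87178291200 : ℝ) = 2 * π ^ 14 / 18243225 := by ring
  rw [e] at h2
  simpa [one_div] using h2

/-- First derivative of the Lennard-Jones potential. -/
noncomputable def Wd (σ t : ℝ) : ℝ := 6 * σ ^ 6 / t ^ 7 - 12 * σ ^ 12 / t ^ 13

/-- Second derivative of the Lennard-Jones potential. -/
noncomputable def Wdd (σ t : ℝ) : ℝ := 156 * σ ^ 12 / t ^ 14 - 42 * σ ^ 6 / t ^ 8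

private lemma hasDerivAt_LJ (σ : ℝ) {t : ℝ} (ht : t ≠ 0) : HasDerivAt (LJ σ) (Wd σ t) t := by
  have h1 : HasDerivAt (fun s : ℝ => s ^ 12) (12 * t ^ 11) t := by
    simpa using hasDerivAt_pow 12 t
  have h2 : HasDerivAt (fun s : ℝ => s ^ 6) (6 * t ^ 5) t := by
    simpa using hasDerivAt_pow 6 t
  have h1' := (h1.inv (pow_ne_zero 12 ht)).const_mul (σ ^ 12)
  have h2' := (h2.inv (pow_ne_zero 6 ht)).const_mul (σ ^ 6)
  have h := h1'.sub h2'
  have heq : (fun s : ℝ => σ ^ 12 * (s ^ 12)⁻¹ - σ ^ 6 * (s ^ 6)⁻¹) = LJ σ := by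
    funext s
    simp [LJ, div_eq_mul_inv, mul_pow, inv_pow]
  change HasDerivAt (fun s : ℝ => σ ^ 12 * (s ^ 12)⁻¹ - σ ^ 6 * (s ^ 6)⁻¹) _ t at h
  rw [heq] at h
  convert h using 1
  unfold Wd
  field_simp
  ring

private lemma hasDerivAt_Wd (σ : ℝ) {t : ℝ} (ht : t ≠ 0) : HasDerivAt (Wd σ) (Wdd σ t) t := by
  have h1 : HasDerivAt (fun s : ℝ => s ^ 7) (7 * t ^ 6) t := by
    simpa using hasDerivAt_pow 7 t
  have h2 : HasDerivAt (fun s : ℝ => s ^ 13) (13 * t ^ 12) t := by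
    simpa using hasDerivAt_pow 13 t
  have h1' := (h1.inv (pow_ne_zero 7 ht)).const_mul (6 * σ ^ 6)
  have h2' := (h2.inv (pow_ne_zero 13 ht)).const_mul (12 * σ ^ 12)
  have h := h1'.sub h2'
  have heq : (fun s : ℝ => 6 * σ ^ 6 * (s ^ 7)⁻¹ - 12 * σ ^ 12 * (s ^ 13)⁻¹) = Wd σ := by
    funext s
    simp [Wd, div_eq_mul_inv]
  change HasDerivAt (fun s : ℝ => 6 * σ ^ 6 * (s ^ 7)⁻¹ - 12 * σ ^ 12 * (s ^ 13)⁻¹) _ t at h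
  rw [heq] at h
  convert h using 1
  unfold Wdd
  field_simp
  ring

private lemma abs_Wd_le (σ : ℝ) (hσ : 0 < σ) {c t : ℝ} (hc : 0 < c) (hct : c ≤ t) :
    |Wd σ t| ≤ 6 * σ ^ 6 / c ^ 7 + 12 * σ ^ 12 / c ^ 13 := by
  have ht : 0 < t := hc.trans_le hct
  have key : ∀ p : ℕ, ∀ A : ℝ, 0 ≤ A → A / t ^ p ≤ A / c ^ p := fun p A hA =>
    div_le_div_of_nonneg_left hA (pow_pos hc p) (pow_le_pow_left₀ hc.le hct p)
  calc |Wd σ t| ≤ |6 * σ ^ 6 / t ^ 7| + |12 * σ ^ 12 / t ^ 13| := by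
        simpa [Wd, Real.norm_eq_abs] using abs_sub (6 * σ ^ 6 / t ^ 7) (12 * σ ^ 12 / t ^ 13)
    _ = 6 * σ ^ 6 / t ^ 7 + 12 * σ ^ 12 / t ^ 13 := by
        rw [abs_of_nonneg (by positivity), abs_of_nonneg (by positivity)]
    _ ≤ 6 * σ ^ 6 / c ^ 7 + 12 * σ ^ 12 / c ^ 13 := by
        exact add_le_add (key 7 _ (by positivity)) (key 13 _ (by positivity))

private lemma abs_Wdd_le (σ : ℝ) (hσ : 0 < σ) {c t : ℝ} (hc : 0 < c) (hct : c ≤ t) :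
    |Wdd σ t| ≤ 156 * σ ^ 12 / c ^ 14 + 42 * σ ^ 6 / c ^ 8 := by
  have ht : 0 < t := hc.trans_le hct
  have key : ∀ p : ℕ, ∀ A : ℝ, 0 ≤ A → A / t ^ p ≤ A / c ^ p := fun p A hA =>
    div_le_div_of_nonneg_left hA (pow_pos hc p) (pow_le_pow_left₀ hc.le hct p)
  calc |Wdd σ t| ≤ |156 * σ ^ 12 / t ^ 14| + |42 * σ ^ 6 / t ^ 8| := by
        simpa [Wdd, Real.norm_eq_abs] using
          abs_sub (156 * σ ^ 12 / t ^ 14) (42 * σ ^ 6 / t ^ 8)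
    _ = 156 * σ ^ 12 / t ^ 14 + 42 * σ ^ 6 / t ^ 8 := by
        rw [abs_of_nonneg (by positivity), abs_of_nonneg (by positivity)]
    _ ≤ 156 * σ ^ 12 / c ^ 14 + 42 * σ ^ 6 / c ^ 8 := by
        exact add_le_add (key 14 _ (by positivity)) (key 8 _ (by positivity))

private lemma abs_LJ_le (σ : ℝ) (hσ : 0 < σ) {c t : ℝ} (hc : 0 < c) (hct : c ≤ t) :
    |LJ σ t| ≤ σ ^ 12 / c ^ 12 + σ ^ 6 / c ^ 6 := by
  have ht : 0 < t := hc.trans_le hct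
  have key : ∀ p : ℕ, ∀ A : ℝ, 0 ≤ A → A / t ^ p ≤ A / c ^ p := fun p A hA =>
    div_le_div_of_nonneg_left hA (pow_pos hc p) (pow_le_pow_left₀ hc.le hct p)
  have h12 : (σ / t) ^ 12 = σ ^ 12 / t ^ 12 := div_pow σ t 12
  have h6 : (σ / t) ^ 6 = σ ^ 6 / t ^ 6 := div_pow σ t 6
  calc |LJ σ t| ≤ |σ ^ 12 / t ^ 12| + |σ ^ 6 / t ^ 6| := by
        simpa [LJ, h12, h6, Real.norm_eq_abs] using
          norm_sub_le (σ ^ 12 / t ^ 12) (σ ^ 6 / t ^ 6)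
    _ = σ ^ 12 / t ^ 12 + σ ^ 6 / t ^ 6 := by
        rw [abs_of_nonneg (by positivity), abs_of_nonneg (by positivity)]
    _ ≤ σ ^ 12 / c ^ 12 + σ ^ 6 / c ^ 6 := by
        exact add_le_add (key 12 _ (by positivity)) (key 6 _ (by positivity))

private lemma summable_shift (C c : ℝ) (hc : 0 < c) {p : ℕ} (hp : 2 ≤ p) :
    Summable (fun n : ℕ => C / (c * ((n : ℝ) + 1)) ^ p) := by
  have h0 : Summable (fun n : ℕ => 1 / ((n : ℝ) + 1) ^ p) := by
    have h := (summable_nat_add_iff (f := fun n : ℕ => 1 / (n : ℝ) ^ p) 1).mpr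
      (Real.summable_one_div_nat_pow.mpr hp)
    convert h using 2 with n
    · rfl
    push_cast
    ring
  have h1 := h0.mul_left (C / c ^ p)
  convert h1 using 2 with n
  · rfl
  have hn : (0 : ℝ) < (n : ℝ) + 1 := by positivity
  rw [mul_pow]
  field_simp

private lemma Fm_two (W : ℝ → ℝ) (a b x : ℝ) :
    Fm W 2 a b (fun _ : Fin (2 - 1) => x) =
      (∑' i : ℕ, (W (b * 2 * x + a * i) - W (b * 1 + a * i)))
      + (∑' j : ℕ, W (b * (((j : ℝ) + 2) - 2 * x)))
      - ∑' j : ℕ, W (b * ((j : ℝ) + 1)) := by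
  simp [Fm]
  norm_num

/-! ### The two series of functions and their derivatives -/

private noncomputable def g1 (σ a : ℝ) (n : ℕ) (x : ℝ) : ℝ :=
  LJ σ (a * 2 * x + a * n) - LJ σ (a * 1 + a * n)

private noncomputable def g2 (σ a : ℝ) (n : ℕ) (x : ℝ) : ℝ :=
  LJ σ (a * (((n : ℝ) + 2) - 2 * x))

private noncomputable def g1d (σ a : ℝ) (n : ℕ) (x : ℝ) : ℝ :=
  Wd σ (a * 2 * x + a * n) * (a * 2)

private noncomputable def g2d (σ a : ℝ) (n : ℕ) (x : ℝ) : ℝ :=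
  Wd σ (a * (((n : ℝ) + 2) - 2 * x)) * (a * -2)

private noncomputable def g1dd (σ a : ℝ) (n : ℕ) (x : ℝ) : ℝ :=
  Wdd σ (a * 2 * x + a * n) * (a * 2) * (a * 2)

private noncomputable def g2dd (σ a : ℝ) (n : ℕ) (x : ℝ) : ℝ :=
  Wdd σ (a * (((n : ℝ) + 2) - 2 * x)) * (a * -2) * (a * -2)

private lemma lb1 {a : ℝ} (ha : 0 < a) (n : ℕ) {x : ℝ} (hx : x ∈ Ioo (1/4 : ℝ) (3/4)) :
    a / 2 * ((n : ℝ) + 1) ≤ a * 2 * x + a * n := by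
  obtain ⟨h1, h2⟩ := hx
  have hn : (0 : ℝ) ≤ (n : ℝ) := n.cast_nonneg
  nlinarith

private lemma lb2 {a : ℝ} (ha : 0 < a) (n : ℕ) {x : ℝ} (hx : x ∈ Ioo (1/4 : ℝ) (3/4)) :
    a / 2 * ((n : ℝ) + 1) ≤ a * (((n : ℝ) + 2) - 2 * x) := by
  obtain ⟨h1, h2⟩ := hx
  have hn : (0 : ℝ) ≤ (n : ℝ) := n.cast_nonneg
  nlinarith

private lemma hd_g1 (σ : ℝ) {a : ℝ} (ha : 0 < a) (n : ℕ) {x : ℝ}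
    (hx : x ∈ Ioo (1/4 : ℝ) (3/4)) : HasDerivAt (fun y => g1 σ a n y) (g1d σ a n x) x := by
  have cpos : (0 : ℝ) < a / 2 * ((n : ℝ) + 1) := by positivity
  have ht : 0 < a * 2 * x + a * n := cpos.trans_le (lb1 ha n hx)
  have inner : HasDerivAt (fun y : ℝ => a * 2 * y + a * (n : ℝ)) (a * 2) x := by
    simpa using ((hasDerivAt_id x).const_mul (a * 2)).add_const (a * (n : ℝ))
  have h := ((hasDerivAt_LJ σ ht.ne').comp x inner).sub_const (LJ σ (a * 1 + a * (n : ℝ)))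
  simpa [g1, g1d, Function.comp] using h

private lemma hd_g2 (σ : ℝ) {a : ℝ} (ha : 0 < a) (n : ℕ) {x : ℝ}
    (hx : x ∈ Ioo (1/4 : ℝ) (3/4)) : HasDerivAt (fun y => g2 σ a n y) (g2d σ a n x) x := by
  have cpos : (0 : ℝ) < a / 2 * ((n : ℝ) + 1) := by positivity
  have ht : 0 < a * (((n : ℝ) + 2) - 2 * x) := cpos.trans_le (lb2 ha n hx)
  have inner : HasDerivAt (fun y : ℝ => a * (((n : ℝ) + 2) - 2 * y)) (a * -2) x := by
    have h := (((hasDerivAt_id x).const_mul (2 : ℝ)).const_sub ((n : ℝ) + 2)).const_mul a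
    simpa using h
  have h := (hasDerivAt_LJ σ ht.ne').comp x inner
  simpa [g2, g2d, Function.comp_def] using h

private lemma hd_g1d (σ : ℝ) {a : ℝ} (ha : 0 < a) (n : ℕ) {x : ℝ}
    (hx : x ∈ Ioo (1/4 : ℝ) (3/4)) : HasDerivAt (fun y => g1d σ a n y) (g1dd σ a n x) x := by
  have cpos : (0 : ℝ) < a / 2 * ((n : ℝ) + 1) := by positivity
  have ht : 0 < a * 2 * x + a * n := cpos.trans_le (lb1 ha n hx)
  have inner : HasDerivAt (fun y : ℝ => a * 2 * y + a * (n : ℝ)) (a * 2) x := by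
    simpa using ((hasDerivAt_id x).const_mul (a * 2)).add_const (a * (n : ℝ))
  have h := ((hasDerivAt_Wd σ ht.ne').comp x inner).mul_const (a * 2)
  simpa [g1d, g1dd, Function.comp] using h

private lemma hd_g2d (σ : ℝ) {a : ℝ} (ha : 0 < a) (n : ℕ) {x : ℝ}
    (hx : x ∈ Ioo (1/4 : ℝ) (3/4)) : HasDerivAt (fun y => g2d σ a n y) (g2dd σ a n x) x := by
  have cpos : (0 : ℝ) < a / 2 * ((n : ℝ) + 1) := by positivity
  have ht : 0 < a * (((n : ℝ) + 2) - 2 * x) := cpos.trans_le (lb2 ha n hx)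
  have inner : HasDerivAt (fun y : ℝ => a * (((n : ℝ) + 2) - 2 * y)) (a * -2) x := by
    have h := (((hasDerivAt_id x).const_mul (2 : ℝ)).const_sub ((n : ℝ) + 2)).const_mul a
    simpa using h
  have h := ((hasDerivAt_Wd σ ht.ne').comp x inner).mul_const (a * -2)
  simpa [g2d, g2dd, Function.comp] using h

private lemma nb1 {σ a : ℝ} (hσ : 0 < σ) (ha : 0 < a) (n : ℕ) {x : ℝ}
    (hx : x ∈ Ioo (1/4 : ℝ) (3/4)) :
    ‖g1d σ a n x‖ ≤
      (6 * σ ^ 6 / (a / 2 * ((n : ℝ) + 1)) ^ 7 +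
        12 * σ ^ 12 / (a / 2 * ((n : ℝ) + 1)) ^ 13) * (a * 2) := by
  have cpos : (0 : ℝ) < a / 2 * ((n : ℝ) + 1) := by positivity
  rw [Real.norm_eq_abs]
  simp only [g1d]
  rw [abs_mul, abs_of_pos (by linarith : (0 : ℝ) < a * 2)]
  exact mul_le_mul_of_nonneg_right (abs_Wd_le σ hσ cpos (lb1 ha n hx)) (by linarith)

private lemma nb2 {σ a : ℝ} (hσ : 0 < σ) (ha : 0 < a) (n : ℕ) {x : ℝ}
    (hx : x ∈ Ioo (1/4 : ℝ) (3/4)) :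
    ‖g2d σ a n x‖ ≤
      (6 * σ ^ 6 / (a / 2 * ((n : ℝ) + 1)) ^ 7 +
        12 * σ ^ 12 / (a / 2 * ((n : ℝ) + 1)) ^ 13) * (a * 2) := by
  have cpos : (0 : ℝ) < a / 2 * ((n : ℝ) + 1) := by positivity
  rw [Real.norm_eq_abs]
  simp only [g2d]
  rw [abs_mul, show |a * -2| = a * 2 by rw [abs_mul, abs_of_pos ha]; norm_num]
  exact mul_le_mul_of_nonneg_right (abs_Wd_le σ hσ cpos (lb2 ha n hx)) (by linarith)

private lemma nb1d {σ a : ℝ} (hσ : 0 < σ) (ha : 0 < a) (n : ℕ) {x : ℝ}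
    (hx : x ∈ Ioo (1/4 : ℝ) (3/4)) :
    ‖g1dd σ a n x‖ ≤
      (156 * σ ^ 12 / (a / 2 * ((n : ℝ) + 1)) ^ 14 +
        42 * σ ^ 6 / (a / 2 * ((n : ℝ) + 1)) ^ 8) * (a * 2) * (a * 2) := by
  have cpos : (0 : ℝ) < a / 2 * ((n : ℝ) + 1) := by positivity
  rw [Real.norm_eq_abs]
  simp only [g1dd]
  rw [abs_mul, abs_mul, abs_of_pos (by linarith : (0 : ℝ) < a * 2)]
  have h := abs_Wdd_le σ hσ cpos (lb1 ha n hx)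
  have h2a : (0 : ℝ) ≤ a * 2 := by linarith
  exact mul_le_mul_of_nonneg_right (mul_le_mul_of_nonneg_right h h2a) h2a

private lemma nb2d {σ a : ℝ} (hσ : 0 < σ) (ha : 0 < a) (n : ℕ) {x : ℝ}
    (hx : x ∈ Ioo (1/4 : ℝ) (3/4)) :
    ‖g2dd σ a n x‖ ≤
      (156 * σ ^ 12 / (a / 2 * ((n : ℝ) + 1)) ^ 14 +
        42 * σ ^ 6 / (a / 2 * ((n : ℝ) + 1)) ^ 8) * (a * 2) * (a * 2) := by
  have cpos : (0 : ℝ) < a / 2 * ((n : ℝ) + 1) := by positivity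
  rw [Real.norm_eq_abs]
  simp only [g2dd]
  rw [abs_mul, abs_mul, show |a * -2| = a * 2 by rw [abs_mul, abs_of_pos ha]; norm_num]
  have h := abs_Wdd_le σ hσ cpos (lb2 ha n hx)
  have h2a : (0 : ℝ) ≤ a * 2 := by linarith
  exact mul_le_mul_of_nonneg_right (mul_le_mul_of_nonneg_right h h2a) h2a

private lemma hu1 {σ a : ℝ} (hσ : 0 < σ) (ha : 0 < a) :
    Summable (fun n : ℕ =>
      (6 * σ ^ 6 / (a / 2 * ((n : ℝ) + 1)) ^ 7 +
        12 * σ ^ 12 / (a / 2 * ((n : ℝ) + 1)) ^ 13) * (a * 2)) := by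
  have h2 : (0 : ℝ) < a / 2 := by linarith
  exact ((summable_shift (6 * σ ^ 6) (a / 2) h2 (by norm_num)).add
    (summable_shift (12 * σ ^ 12) (a / 2) h2 (by norm_num))).mul_right (a * 2)

private lemma hu2 {σ a : ℝ} (hσ : 0 < σ) (ha : 0 < a) :
    Summable (fun n : ℕ =>
      (156 * σ ^ 12 / (a / 2 * ((n : ℝ) + 1)) ^ 14 +
        42 * σ ^ 6 / (a / 2 * ((n : ℝ) + 1)) ^ 8) * (a * 2) * (a * 2)) := by
  have h2 : (0 : ℝ) < a / 2 := by linarith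
  exact (((summable_shift (156 * σ ^ 12) (a / 2) h2 (by norm_num)).add
    (summable_shift (42 * σ ^ 6) (a / 2) h2 (by norm_num))).mul_right (a * 2)).mul_right (a * 2)

/-- for the Lennard-Jones potential, the second derivative of
`x₁ ↦ F₂(a,a;x₁)` at `x₁ = 1/2` is positive if and only if
`a/σ < (8/2079)^{1/6} π`. -/
theorem stmt19 (σ a : ℝ) (hσ : 0 < σ) (ha : 0 < a) :
    0 < deriv (deriv (fun x : ℝ => Fm (LJ σ) 2 a a (fun _ : Fin (2 - 1) => x))) (1 / 2) ↔
      a / σ < (8 / 2079 : ℝ) ^ ((1 : ℝ) / 6) * π := by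
  have h12 : (1/2 : ℝ) ∈ Ioo (1/4 : ℝ) (3/4) := by norm_num
  have hsopen : IsOpen (Ioo (1/4 : ℝ) (3/4)) := isOpen_Ioo
  have hconn : IsPreconnected (Ioo (1/4 : ℝ) (3/4)) := isPreconnected_Ioo
  -- summability of the series at the base point 1/2
  have S0g1 : Summable (fun n : ℕ => g1 σ a n (1/2)) := by
    have hz : ∀ n : ℕ, g1 σ a n (1/2) = 0 := by
      intro n
      simp only [g1]
      rw [show a * 2 * (1/2 : ℝ) + a * (n : ℝ) = a * 1 + a * (n : ℝ) by ring, sub_self]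
    exact (summable_congr fun n => by rw [hz n]).mpr summable_zero
  have S0g2 : Summable (fun n : ℕ => g2 σ a n (1/2)) := by
    have h2 : (0 : ℝ) < a / 2 := by linarith
    refine Summable.of_norm_bounded
      (g := fun n : ℕ => σ ^ 12 / (a / 2 * ((n : ℝ) + 1)) ^ 12 + σ ^ 6 / (a / 2 * ((n : ℝ) + 1)) ^ 6)
      ((summable_shift (σ ^ 12) (a / 2) h2 (by norm_num)).add
        (summable_shift (σ ^ 6) (a / 2) h2 (by norm_num))) (fun n => ?_)
    have cpos : (0 : ℝ) < a / 2 * ((n : ℝ) + 1) := by positivity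
    simpa [g2, Real.norm_eq_abs] using abs_LJ_le σ hσ cpos (lb2 ha n h12)
  -- first derivatives of the two series on the interval
  have H1 : ∀ x ∈ Ioo (1/4 : ℝ) (3/4),
      HasDerivAt (fun y => ∑' n : ℕ, g1 σ a n y) (∑' n : ℕ, g1d σ a n x) x := fun x hx =>
    hasDerivAt_tsum_of_isPreconnected (hu1 hσ ha) hsopen hconn
      (fun n y hy => hd_g1 σ ha n hy) (fun n y hy => nb1 hσ ha n hy) h12 S0g1 hx
  have H2 : ∀ x ∈ Ioo (1/4 : ℝ) (3/4),
      HasDerivAt (fun y => ∑' n : ℕ, g2 σ a n y) (∑' n : ℕ, g2d σ a n x) x := fun x hx =>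
    hasDerivAt_tsum_of_isPreconnected (hu1 hσ ha) hsopen hconn
      (fun n y hy => hd_g2 σ ha n hy) (fun n y hy => nb2 hσ ha n hy) h12 S0g2 hx
  -- second derivatives at 1/2
  have S1 : Summable (fun n : ℕ => g1d σ a n (1/2)) :=
    Summable.of_norm_bounded (hu1 hσ ha) (fun n => nb1 hσ ha n h12)
  have S2 : Summable (fun n : ℕ => g2d σ a n (1/2)) :=
    Summable.of_norm_bounded (hu1 hσ ha) (fun n => nb2 hσ ha n h12)
  have H1' : HasDerivAt (fun y => ∑' n : ℕ, g1d σ a n y) (∑' n : ℕ, g1dd σ a n (1/2)) (1/2) :=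
    hasDerivAt_tsum_of_isPreconnected (hu2 hσ ha) hsopen hconn
      (fun n y hy => hd_g1d σ ha n hy) (fun n y hy => nb1d hσ ha n hy) h12 S1 h12
  have H2' : HasDerivAt (fun y => ∑' n : ℕ, g2d σ a n y) (∑' n : ℕ, g2dd σ a n (1/2)) (1/2) :=
    hasDerivAt_tsum_of_isPreconnected (hu2 hσ ha) hsopen hconn
      (fun n y hy => hd_g2d σ ha n hy) (fun n y hy => nb2d hσ ha n hy) h12 S2 h12
  -- rewrite the target function
  have hFeq : (fun x : ℝ => Fm (LJ σ) 2 a a (fun _ : Fin (2 - 1) => x)) =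
      fun x => (∑' n : ℕ, g1 σ a n x) + (∑' n : ℕ, g2 σ a n x)
        - ∑' j : ℕ, LJ σ (a * ((j : ℝ) + 1)) := by
    funext x
    simp only [g1, g2]
    exact Fm_two (LJ σ) a a x
  have hD : ∀ x ∈ Ioo (1/4 : ℝ) (3/4),
      HasDerivAt (fun x : ℝ => Fm (LJ σ) 2 a a (fun _ : Fin (2 - 1) => x))
        ((∑' n : ℕ, g1d σ a n x) + ∑' n : ℕ, g2d σ a n x) x := by
    intro x hx
    rw [hFeq]
    exact ((H1 x hx).add (H2 x hx)).sub_const _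
  have hev : deriv (fun x : ℝ => Fm (LJ σ) 2 a a (fun _ : Fin (2 - 1) => x)) =ᶠ[nhds (1/2)]
      fun x => (∑' n : ℕ, g1d σ a n x) + ∑' n : ℕ, g2d σ a n x := by
    filter_upwards [hsopen.mem_nhds h12] with x hx
    exact (hD x hx).deriv
  rw [hev.deriv_eq, (H1'.fun_add H2').deriv]
  -- compute the sums
  have hterm1 : ∀ n : ℕ, g1dd σ a n (1/2) =
      (624 * σ ^ 12 / a ^ 12) * (1 / ((n : ℝ) + 1) ^ 14)
        - (168 * σ ^ 6 / a ^ 6) * (1 / ((n : ℝ) + 1) ^ 8) := by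
    intro n
    have hn : (0 : ℝ) < (n : ℝ) + 1 := by positivity
    simp only [g1dd, Wdd]
    rw [show a * 2 * (1/2) + a * (n : ℝ) = a * ((n : ℝ) + 1) by ring]
    field_simp
    ring
  have hterm2 : ∀ n : ℕ, g2dd σ a n (1/2) =
      (624 * σ ^ 12 / a ^ 12) * (1 / ((n : ℝ) + 1) ^ 14)
        - (168 * σ ^ 6 / a ^ 6) * (1 / ((n : ℝ) + 1) ^ 8) := by
    intro n
    have hn : (0 : ℝ) < (n : ℝ) + 1 := by positivity
    simp only [g2dd, Wdd]
    rw [show a * (((n : ℝ) + 2) - 2 * (1/2)) = a * ((n : ℝ) + 1) by ring]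
    field_simp
    ring
  have S14 : Summable (fun n : ℕ => 1 / ((n : ℝ) + 1) ^ 14) := hasSum_zeta14.summable
  have S8 : Summable (fun n : ℕ => 1 / ((n : ℝ) + 1) ^ 8) := hasSum_zeta8.summable
  have hval : ∀ g : ℕ → ℝ → ℝ, (∀ n : ℕ, g n (1/2) =
      (624 * σ ^ 12 / a ^ 12) * (1 / ((n : ℝ) + 1) ^ 14)
        - (168 * σ ^ 6 / a ^ 6) * (1 / ((n : ℝ) + 1) ^ 8)) →
      (∑' n : ℕ, g n (1/2)) =
        (624 * σ ^ 12 / a ^ 12) * (2 * π ^ 14 / 18243225)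
          - (168 * σ ^ 6 / a ^ 6) * (π ^ 8 / 9450) := by
    intro g hg
    rw [tsum_congr hg, Summable.tsum_sub (S14.mul_left _) (S8.mul_left _), tsum_mul_left, tsum_mul_left,
      hasSum_zeta14.tsum_eq, hasSum_zeta8.tsum_eq]
  rw [hval _ hterm1, hval _ hterm2]
  -- final algebra
  have hπ := Real.pi_pos
  have hfact : (624 * σ ^ 12 / a ^ 12) * (2 * π ^ 14 / 18243225)
        - (168 * σ ^ 6 / a ^ 6) * (π ^ 8 / 9450)
      + ((624 * σ ^ 12 / a ^ 12) * (2 * π ^ 14 / 18243225)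
        - (168 * σ ^ 6 / a ^ 6) * (π ^ 8 / 9450))
      = (8 / a ^ 12) * (σ ^ 6 * π ^ 8 / 225) * ((8 / 2079) * π ^ 6 * σ ^ 6 - a ^ 6) := by
    field_simp
    ring
  rw [hfact]
  have hc : (0 : ℝ) < (8 / a ^ 12) * (σ ^ 6 * π ^ 8 / 225) := by positivity
  rw [mul_pos_iff_of_pos_left hc, sub_pos]
  have hr : ((8 / 2079 : ℝ) ^ ((1 : ℝ) / 6) * π) ^ 6 = (8 / 2079) * π ^ 6 := by
    rw [mul_pow, ← Real.rpow_natCast ((8 / 2079 : ℝ) ^ ((1 : ℝ) / 6)) 6,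
      ← Real.rpow_mul (by norm_num)]
    norm_num
  rw [show (8 / 2079 : ℝ) * π ^ 6 * σ ^ 6 = ((8 / 2079 : ℝ) ^ ((1 : ℝ) / 6) * π) ^ 6 * σ ^ 6
    by rw [hr]]
  rw [← div_lt_iff₀ (by positivity), ← div_pow]
  exact pow_lt_pow_iff_left₀ (by positivity) (by positivity) (by norm_num)
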